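/- In the configuration of the previous statement, the circle ϖ'_{i,j} through L'_j, L'_i, M'_i, M'_j (centered at (i+j−1, 0) with radius √(1+(j−i)²)) intersects the circle k'_j (unit circle centered at (2j−1, 0)) at the point L'_j = (2j−1, 1), and the tangent of the angle between the two circles at this intersection point equals j − i. -/

import Mathlib

open Metric EuclideanGeometry

noncomputable def pt (a b : ℝ) : EuclideanSpace ℝ (Fin 2) := !₂[a, b]

lemma dist_pt' (a b c d : ℝ) : dist (pt a b) (pt c d) = Real.sqrt ((a - c)^2 + (b - d)^2) := by
  rw [EuclideanSpace.dist_eq]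
  congr 1
  simp [pt, Fin.sum_univ_two, Real.dist_eq, sq_abs]

lemma inner_sub_pt' (a b c d e f : ℝ) :
    (inner ℝ (pt a b - pt e f) (pt c d - pt e f) : ℝ) = (a - e) * (c - e) + (b - f) * (d - f) := by
  simp [pt, PiLp.inner_apply, Fin.sum_univ_two]; ring

/-- The circle `ϖ'_{i,j}` centered at `(i+j-1, 0)` with radius `√(1+(j-i)²)` and the
unit circle `k'ⱼ` centered at `(2j-1, 0)` both pass through `L'ⱼ = (2j-1, 1)`, and the
tangent of the angle between the two circles there (the angle between the radii,
i.e. `∠ O₁ P O₂`) equals `j - i`. -/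
theorem stmt5 (i j : ℕ) (hi : 1 ≤ i) (hij : i < j) :
    let O₁ := pt (2 * (j : ℝ) - 1) 0
    let O₂ := pt ((i : ℝ) + (j : ℝ) - 1) 0
    let P := pt (2 * (j : ℝ) - 1) 1
    P ∈ sphere O₁ 1 ∧
    P ∈ sphere O₂ (Real.sqrt (1 + ((j : ℝ) - (i : ℝ)) ^ 2)) ∧
    Real.tan (∠ O₁ P O₂) = (j : ℝ) - (i : ℝ) := by
  intro O₁ O₂ P
  set d : ℝ := (j : ℝ) - (i : ℝ) with hd
  have hd0 : 0 < d := by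
    have : (i : ℝ) < j := by exact_mod_cast hij
    simp only [hd]; linarith
  have hs : (0:ℝ) < 1 + d ^ 2 := by positivity
  refine ⟨?_, ?_, ?_⟩
  · show dist P O₁ = 1
    rw [dist_pt']
    norm_num
  · show dist P O₂ = Real.sqrt (1 + d ^ 2)
    rw [dist_pt']
    congr 1
    ring
  · rw [EuclideanGeometry.angle, InnerProductGeometry.angle]
    have h1 : ‖O₁ -ᵥ P‖ = 1 := by
      rw [vsub_eq_sub, ← dist_eq_norm, dist_pt']; norm_num
    have h2 : ‖O₂ -ᵥ P‖ = Real.sqrt (1 + d^2) := by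
      rw [vsub_eq_sub, ← dist_eq_norm, dist_pt']; congr 1; simp only [hd]; ring
    have h3 : (inner ℝ (O₁ -ᵥ P) (O₂ -ᵥ P) : ℝ) = 1 := by
      rw [vsub_eq_sub, vsub_eq_sub, inner_sub_pt']; ring
    rw [h1, h2, h3, one_mul, Real.tan_arccos]
    rw [div_pow, one_pow, Real.sq_sqrt hs.le]
    have h4 : 1 - 1 / (1 + d^2) = d^2 / (1 + d^2) := by field_simp; ring
    rw [h4]
    rw [show Real.sqrt (d^2/(1+d^2)) = d / Real.sqrt (1+d^2) by
      rw [Real.sqrt_div (by positivity), Real.sqrt_sq hd0.le]]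
    have hsep : Real.sqrt (1 + d^2) ≠ 0 := by positivity
    field_simp
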